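/- arXiv:0904.1266 — 3 statements merged into one kernel-verified Lean document; each statement's English description precedes it below -/
import Mathlib

section
/- If a and b are positive integers with gcd(a,b)=1 and a,b ≥ 2, then (a-1)(b-1)-1 cannot be written as k₁·a + k₂·b with k₁, k₂ nonnegative integers. -/
theorem sylvester_frobenius_number (a b : ℕ) (ha : 2 ≤ a) (hb : 2 ≤ b)
    (hab : Nat.gcd a b = 1) :
    ¬ ∃ k₁ k₂ : ℕ, (a - 1) * (b - 1) - 1 = k₁ * a + k₂ * b := by
  rintro ⟨k₁, k₂, h⟩
  have hmn : a + b ≤ a * b := Nat.add_le_mul ha hb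
  have key : (a - 1) * (b - 1) - 1 = a * b - a - b := by
    have h1 : 1 ≤ a := by omega
    have h2 : 1 ≤ b := by omega
    have h3 : 1 ≤ (a - 1) * (b - 1) := Nat.mul_pos (by omega) (by omega)
    have h4 : a ≤ a * b := by omega
    have h5 : b ≤ a * b - a := by omega
    zify [h1, h2, h3, h4, h5]
    ring
  have H := (frobeniusNumber_pair hab (by omega) (by omega)).1
  simp only [Set.mem_setOf_eq, AddSubmonoid.mem_closure_pair] at H
  exact H ⟨k₁, k₂, by simp only [smul_eq_mul]; omega⟩
end

section
/- Let p₂ > 3 be a prime and d₃ ≥ p₂ an integer. Then d₃ is NOT representable as 3k₁ + p₂k₂ with k₁,k₂ ∈ ℕ if and only if d₃ ∈ {2p₂ - 3k : k = 1, …, ⌊p₂/3⌋}. -/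
theorem not_representable_iff_gap_set (p₂ d₃ : ℕ) (hp : Nat.Prime p₂) (hp3 : 3 < p₂)
    (hd : p₂ ≤ d₃) :
    (¬ ∃ k₁ k₂ : ℕ, d₃ = 3 * k₁ + p₂ * k₂) ↔
      ∃ k : ℕ, 1 ≤ k ∧ k ≤ p₂ / 3 ∧ d₃ = 2 * p₂ - 3 * k := by
  have hp3d : p₂ % 3 ≠ 0 := by
    intro h
    rcases (Nat.Prime.eq_one_or_self_of_dvd hp 3 (Nat.dvd_of_mod_eq_zero h)) with h' | h' <;> omega
  constructor
  · intro h
    have h0 : d₃ % 3 ≠ 0 := fun hh => h ⟨d₃ / 3, 0, by omega⟩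
    have h1 : d₃ % 3 ≠ p₂ % 3 := fun hh => h ⟨(d₃ - p₂) / 3, 1, by omega⟩
    have hs : d₃ % 3 = 2 * p₂ % 3 := by omega
    have h2 : d₃ < 2 * p₂ := by
      by_contra hh
      exact h ⟨(d₃ - 2 * p₂) / 3, 2, by omega⟩
    exact ⟨(2 * p₂ - d₃) / 3, by omega, by omega, by omega⟩
  · rintro ⟨k, hk1, hk3, rfl⟩ ⟨k₁, k₂, heq⟩
    have hk2 : k₂ ≤ 1 := by
      by_contra hh
      have : 2 * p₂ ≤ p₂ * k₂ := by nlinarith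
      omega
    interval_cases k₂ <;> omega
end

section
/- For coprime positive integers a < b with a ≥ 2, the number of positive integers not representable as a nonnegative integer combination of a and b equals (a-1)(b-1)/2. -/
private lemma repZ_iff (a b : ℤ) (ha : 0 < a) (hb : 0 < b) (hcop : IsCoprime a b)
    (n x : ℤ) (hx0 : 0 ≤ x) (hxa : x < a) (hmod : a ∣ n - x * b) :
    (∃ k₁ k₂ : ℤ, 0 ≤ k₁ ∧ 0 ≤ k₂ ∧ n = k₁ * a + k₂ * b) ↔ x * b ≤ n := by
  constructor
  · rintro ⟨k₁, k₂, hk₁, hk₂, rfl⟩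
    obtain ⟨c, hc⟩ := hmod
    set q := k₂ / a with hq
    set r := k₂ % a with hr
    have hr0 : 0 ≤ r := Int.emod_nonneg _ (by omega)
    have hra : r < a := Int.emod_lt_of_pos _ ha
    have hk₂' : k₂ = a * q + r := by
      rw [hq, hr]; linarith [Int.mul_ediv_add_emod k₂ a]
    have hqn : 0 ≤ q := Int.ediv_nonneg hk₂ (le_of_lt ha)
    have hdvd : a ∣ r - x := by
      exact hcop.dvd_of_dvd_mul_right ⟨c - k₁ - q * b, by linear_combination hc - b * hk₂'⟩
    obtain ⟨d, hd⟩ := hdvd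
    have h1 : d < 1 := by nlinarith
    have h2 : -1 < d := by nlinarith
    have hd0 : d = 0 := by omega
    rw [hd0, mul_zero] at hd
    have hrx : r = x := by omega
    have hexp : k₁ * a + k₂ * b = k₁ * a + (a * q) * b + x * b := by
      rw [hk₂', hrx]; ring
    rw [hexp]
    nlinarith [mul_nonneg hk₁ ha.le, mul_nonneg (mul_nonneg ha.le hqn) hb.le]
  · intro h
    obtain ⟨c, hc⟩ := hmod
    have hc0 : 0 ≤ c := by
      by_contra hcon
      push_neg at hcon
      have : c ≤ -1 := by omega
      nlinarith
    exact ⟨c, x, hc0, hx0, by linarith⟩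

private lemma keyZ (a b : ℤ) (ha : 2 ≤ a) (hb : 0 < b) (hcop : IsCoprime a b) (n : ℤ) :
    (∃ k₁ k₂ : ℤ, 0 ≤ k₁ ∧ 0 ≤ k₂ ∧ n = k₁ * a + k₂ * b) ↔
      ¬ (∃ k₁ k₂ : ℤ, 0 ≤ k₁ ∧ 0 ≤ k₂ ∧ a * b - a - b - n = k₁ * a + k₂ * b) := by
  obtain ⟨u, v, huv⟩ := hcop
  have ha0 : (0:ℤ) < a := by omega
  set x := (n * v) % a with hxdef
  have hx0 : 0 ≤ x := Int.emod_nonneg _ (by omega)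
  have hxa : x < a := Int.emod_lt_of_pos _ ha0
  have hmod : a ∣ n - x * b := by
    refine ⟨n * u + (n * v / a) * b, ?_⟩
    rw [hxdef, Int.emod_def]
    linear_combination (-n) * huv
  obtain ⟨c, hc⟩ := hmod
  have hmod2 : a ∣ (a * b - a - b - n) - (a - 1 - x) * b :=
    ⟨-c - 1, by linear_combination -hc⟩
  rw [repZ_iff a b ha0 hb ⟨u, v, huv⟩ n x hx0 hxa ⟨c, hc⟩,
      repZ_iff a b ha0 hb ⟨u, v, huv⟩ (a * b - a - b - n) (a - 1 - x)
        (by omega) (by omega) hmod2]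
  constructor
  · intro h h'
    nlinarith
  · intro h
    push_neg at h
    have hlt : (-1 : ℤ) < c := by nlinarith
    have h2 : 0 ≤ c := by omega
    nlinarith

theorem sylvester_gap_count (a b : ℕ) (ha : 2 ≤ a) (hab : a < b)
    (hcop : Nat.Coprime a b) :
    Set.ncard {n : ℕ | 0 < n ∧ ¬ ∃ k₁ k₂ : ℕ, n = k₁ * a + k₂ * b} =
      (a - 1) * (b - 1) / 2 := by
  classical
  have hb : 0 < b := by omega
  have hcopZ : IsCoprime (a : ℤ) (b : ℤ) := by
    rw [Int.isCoprime_iff_gcd_eq_one]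
    exact_mod_cast hcop
  have hbridge : ∀ n : ℕ, (∃ k₁ k₂ : ℕ, n = k₁ * a + k₂ * b) ↔
      (∃ k₁ k₂ : ℤ, 0 ≤ k₁ ∧ 0 ≤ k₂ ∧ (n : ℤ) = k₁ * a + k₂ * b) := by
    intro n
    constructor
    · rintro ⟨k₁, k₂, rfl⟩
      exact ⟨k₁, k₂, by positivity, by positivity, by push_cast; ring⟩
    · rintro ⟨k₁, k₂, hk₁, hk₂, h⟩
      refine ⟨k₁.toNat, k₂.toNat, ?_⟩
      have : (n : ℤ) = (k₁.toNat : ℤ) * a + (k₂.toNat : ℤ) * b := by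
        rw [Int.toNat_of_nonneg hk₁, Int.toNat_of_nonneg hk₂]; exact h
      exact_mod_cast this
  have key : ∀ n : ℤ, (∃ k₁ k₂ : ℤ, 0 ≤ k₁ ∧ 0 ≤ k₂ ∧ n = k₁ * a + k₂ * b) ↔
      ¬ (∃ k₁ k₂ : ℤ, 0 ≤ k₁ ∧ 0 ≤ k₂ ∧ (a:ℤ) * b - a - b - n = k₁ * a + k₂ * b) :=
    keyZ a b (by exact_mod_cast ha) (by exact_mod_cast hb) hcopZ
  set F : ℕ := a * b - a - b with hF
  have hFle : a + b ≤ a * b := by nlinarith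
  have hFZ : (F : ℤ) = (a:ℤ) * b - a - b := by
    rw [hF]; push_cast [Nat.sub_sub]; omega
  set P : ℕ → Prop := fun n => ∃ k₁ k₂ : ℕ, n = k₁ * a + k₂ * b with hP
  -- n > F implies representable
  have hbig : ∀ n : ℕ, F < n → P n := by
    intro n hn
    show ∃ k₁ k₂ : ℕ, n = k₁ * a + k₂ * b
    rw [hbridge n, key (n : ℤ)]
    rintro ⟨k₁, k₂, hk₁, hk₂, h⟩
    have h0 : (0:ℤ) ≤ k₁ * a + k₂ * b := by positivity
    rw [← h, ← hFZ] at h0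
    have h1 : (n : ℤ) ≤ (F : ℤ) := by linarith
    have h2 : n ≤ F := by exact_mod_cast h1
    omega
  have hset : {n : ℕ | 0 < n ∧ ¬ P n} =
      ↑((Finset.range (F + 1)).filter (fun n => ¬ P n)) := by
    ext n
    simp only [Finset.coe_filter, Finset.mem_range, Set.mem_setOf_eq]
    constructor
    · rintro ⟨hn, hnp⟩
      refine ⟨?_, hnp⟩
      by_contra hx
      exact hnp (hbig n (by omega))
    · rintro ⟨hn, hnp⟩
      refine ⟨?_, hnp⟩
      rcases Nat.eq_zero_or_pos n with rfl | h
      · exact absurd ⟨0, 0, by simp⟩ hnp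
      · exact h
  rw [hset, Set.ncard_coe_finset]
  have hflip : ∀ n : ℕ, n ≤ F → (P n ↔ ¬ P (F - n)) := by
    intro n hn
    show (∃ k₁ k₂ : ℕ, n = k₁ * a + k₂ * b) ↔
      ¬ ∃ k₁ k₂ : ℕ, F - n = k₁ * a + k₂ * b
    have hcast : ((F - n : ℕ) : ℤ) = (a:ℤ) * b - a - b - n := by
      rw [Nat.cast_sub hn, hFZ]
    rw [hbridge, hbridge, hcast, key (n : ℤ)]
  have hcard : ((Finset.range (F + 1)).filter (fun n => ¬ P n)).card =
      ((Finset.range (F + 1)).filter (fun n => P n)).card := by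
    apply Finset.card_nbij' (fun n => F - n) (fun n => F - n)
    · intro n hn
      simp only [Finset.mem_coe, Finset.mem_filter, Finset.mem_range] at hn ⊢
      have hnF : n ≤ F := by omega
      refine ⟨by omega, ?_⟩
      by_contra hnot
      exact hn.2 ((hflip n hnF).mpr hnot)
    · intro n hn
      simp only [Finset.mem_coe, Finset.mem_filter, Finset.mem_range] at hn ⊢
      have hnF : n ≤ F := by omega
      exact ⟨by omega, (hflip n hnF).mp hn.2⟩
    · intro n hn
      simp only [Finset.mem_coe, Finset.mem_filter, Finset.mem_range] at hn
      exact Nat.sub_sub_self (by omega)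
    · intro n hn
      simp only [Finset.mem_coe, Finset.mem_filter, Finset.mem_range] at hn
      exact Nat.sub_sub_self (by omega)
  have htot : ((Finset.range (F + 1)).filter (fun n => P n)).card +
      ((Finset.range (F + 1)).filter (fun n => ¬ P n)).card = F + 1 := by
    rw [Finset.card_filter_add_card_filter_not, Finset.card_range]
  have hFval : F + 1 = (a - 1) * (b - 1) := by
    obtain ⟨a', rfl⟩ : ∃ a', a = a' + 2 := ⟨a - 2, by omega⟩
    obtain ⟨b', rfl⟩ : ∃ b', b = b' + 3 := ⟨b - 3, by omega⟩
    have h1 : (a' + 2) * (b' + 3) = a' * b' + 3 * a' + 2 * b' + 6 := by ring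
    have h2 : (a' + 1) * (b' + 2) = a' * b' + 2 * a' + b' + 2 := by ring
    rw [show a' + 2 - 1 = a' + 1 from by omega, show b' + 3 - 1 = b' + 2 from by omega]
    omega
  omega
end
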